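/- Let (N, [·,…,·], α) be a multiplicative n-ary Hom-Nambu algebra. If D is an α^k-derivation and D′ is an α^{k′}-derivation of N, then their commutator [D,D′] = D∘D′ − D′∘D is an α^{k+k′}-derivation of N. -/

import Mathlib

/-- in a multiplicative n-ary Hom-Nambu algebra (N,[·,…,·],α)
(arity n = m+1), if D is an α^k-derivation and D′ an α^{k′}-derivation, then
[D,D′] = D∘D′ − D′∘D is an α^{k+k′}-derivation. -/
theorem commutator_derivation {K N : Type*} [Field K] [CharZero K]
    [AddCommGroup N] [Module K N]
    (m : ℕ) (br : MultilinearMap K (fun _ : Fin (m + 1) => N) N) (α : Module.End K N)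
    (hmult : ∀ x : Fin (m + 1) → N, α (br x) = br (fun i => α (x i)))
    (hNambu : ∀ (x : Fin m → N) (y : Fin (m + 1) → N),
      br (Fin.snoc (fun i => α (x i)) (br y)) =
        ∑ i : Fin (m + 1),
          br (Function.update (fun j => α (y j)) i (br (Fin.snoc x (y i)))))
    (k k' : ℕ) (D D' : Module.End K N)
    (hDα : ∀ x, D (α x) = α (D x))
    (hD'α : ∀ x, D' (α x) = α (D' x))
    (hD : ∀ x : Fin (m + 1) → N,
      D (br x) = ∑ i : Fin (m + 1),
        br (Function.update (fun j => (α ^ k) (x j)) i (D (x i))))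
    (hD' : ∀ x : Fin (m + 1) → N,
      D' (br x) = ∑ i : Fin (m + 1),
        br (Function.update (fun j => (α ^ k') (x j)) i (D' (x i)))) :
    (∀ x, (D ∘ₗ D' - D' ∘ₗ D) (α x) = α ((D ∘ₗ D' - D' ∘ₗ D) x)) ∧
    (∀ x : Fin (m + 1) → N,
      (D ∘ₗ D' - D' ∘ₗ D) (br x) =
        ∑ i : Fin (m + 1),
          br (Function.update (fun j => (α ^ (k + k')) (x j)) i
            ((D ∘ₗ D' - D' ∘ₗ D) (x i)))) := by
  have hDpow : ∀ (n : ℕ) (z : N), D ((α ^ n) z) = (α ^ n) (D z) := by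
    intro n
    induction n with
    | zero => intro z; simp
    | succ n ih =>
        intro z
        simp only [pow_succ, Module.End.mul_apply, ih, hDα]
  have hD'pow : ∀ (n : ℕ) (z : N), D' ((α ^ n) z) = (α ^ n) (D' z) := by
    intro n
    induction n with
    | zero => intro z; simp
    | succ n ih =>
        intro z
        simp only [pow_succ, Module.End.mul_apply, ih, hD'α]
  constructor
  · intro x
    simp [LinearMap.sub_apply, LinearMap.comp_apply, hDα, hD'α, map_sub]
  · intro x
    classical
    set c : Fin (m + 1) → N := fun l => (α ^ (k + k')) (x l) with hc
    have hcc : ∀ l, (α ^ k) ((α ^ k') (x l)) = c l := by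
      intro l; simp only [hc, pow_add, Module.End.mul_apply]
    have hcc' : ∀ l, (α ^ k') ((α ^ k) (x l)) = c l := by
      intro l; simp only [hc, add_comm k k', pow_add, Module.End.mul_apply]
    -- u i : the i-th argument tuple in the D'-expansion
    set u : Fin (m + 1) → Fin (m + 1) → N :=
      fun i => Function.update (fun l => (α ^ k') (x l)) i (D' (x i)) with hu
    set v : Fin (m + 1) → Fin (m + 1) → N :=
      fun i => Function.update (fun l => (α ^ k) (x l)) i (D (x i)) with hv
    set f : Fin (m + 1) → Fin (m + 1) → N :=
      fun i j => br (Function.update (fun l => (α ^ k) (u i l)) j (D (u i j))) with hf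
    set g : Fin (m + 1) → Fin (m + 1) → N :=
      fun i j => br (Function.update (fun l => (α ^ k') (v i l)) j (D' (v i j))) with hg
    have hu1 : ∀ i, u i i = D' (x i) := by intro i; simp [hu]
    have hu2 : ∀ i l, l ≠ i → u i l = (α ^ k') (x l) := by
      intro i l h; simp [hu, Function.update_of_ne h]
    have hv1 : ∀ i, v i i = D (x i) := by intro i; simp [hv]
    have hv2 : ∀ i l, l ≠ i → v i l = (α ^ k) (x l) := by
      intro i l h; simp [hv, Function.update_of_ne h]
    have hDD' : D (D' (br x)) = ∑ i, ∑ j, f i j := by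
      rw [hD' x, map_sum]
      exact Finset.sum_congr rfl fun i _ => hD (u i)
    have hD'D : D' (D (br x)) = ∑ i, ∑ j, g i j := by
      rw [hD x, map_sum]
      exact Finset.sum_congr rfl fun i _ => hD' (v i)
    -- diagonal terms
    have hfdiag : ∀ i, f i i = br (Function.update c i (D (D' (x i)))) := by
      intro i
      simp only [hf]
      congr 1
      funext l
      by_cases h : l = i
      · subst h
        rw [Function.update_self, Function.update_self, hu1]
      · rw [Function.update_of_ne h, Function.update_of_ne h, hu2 i l h, hcc]
    have hgdiag : ∀ i, g i i = br (Function.update c i (D' (D (x i)))) := by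
      intro i
      simp only [hg]
      congr 1
      funext l
      by_cases h : l = i
      · subst h
        rw [Function.update_self, Function.update_self, hv1]
      · rw [Function.update_of_ne h, Function.update_of_ne h, hv2 i l h, hcc']
    -- off-diagonal terms
    have hoff : ∀ i j, i ≠ j → f i j = g j i := by
      intro i j hij
      have hfval : f i j =
          br (Function.update (Function.update c i ((α ^ k) (D' (x i)))) j
            ((α ^ k') (D (x j)))) := by
        simp only [hf]
        congr 1
        funext l
        by_cases hl : l = j
        · subst hl
          rw [Function.update_self, Function.update_self,
            hu2 i l (Ne.symm hij), hDpow]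
        · rw [Function.update_of_ne hl, Function.update_of_ne hl]
          by_cases hl' : l = i
          · subst hl'
            rw [hu1, Function.update_self]
          · rw [hu2 i l hl', hcc, Function.update_of_ne hl']
      have hgval : g j i =
          br (Function.update (Function.update c j ((α ^ k') (D (x j)))) i
            ((α ^ k) (D' (x i)))) := by
        simp only [hg]
        congr 1
        funext l
        by_cases hl : l = i
        · subst hl
          rw [Function.update_self, Function.update_self,
            hv2 j l hij, hD'pow]
        · rw [Function.update_of_ne hl, Function.update_of_ne hl]
          by_cases hl' : l = j
          · subst hl'
            rw [hv1, Function.update_self]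
          · rw [hv2 j l hl', hcc', Function.update_of_ne hl']
      rw [hfval, hgval, Function.update_comm hij]
    -- now the main computation
    have lhs_eq : (D ∘ₗ D' - D' ∘ₗ D) (br x) = ∑ i, ∑ j, (f i j - g j i) := by
      have : (∑ i, ∑ j, g i j : N) = ∑ i, ∑ j, g j i := Finset.sum_comm
      simp only [LinearMap.sub_apply, LinearMap.comp_apply]
      rw [hDD', hD'D, this, ← Finset.sum_sub_distrib]
      exact Finset.sum_congr rfl fun i _ => by rw [Finset.sum_sub_distrib]
    rw [lhs_eq]
    refine Finset.sum_congr rfl fun i _ => ?_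
    have inner : (∑ j, (f i j - g j i) : N) = f i i - g i i := by
      refine Finset.sum_eq_single i (fun j _ hj => ?_) (by simp)
      rw [hoff i j (Ne.symm hj), sub_self]
    rw [inner, hfdiag, hgdiag]
    have := br.map_update_sub (Function.update c i 0) i (D (D' (x i))) (D' (D (x i)))
    simp only [Function.update_idem] at this
    rw [← this]
    simp [LinearMap.sub_apply, LinearMap.comp_apply, c]
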